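/- Let μ be a measure on (0,∞) with ∫ min{r,1} μ(dr) < ∞ and f(λ) = ∫_{(0,∞)} (1 − e^{−λ r}) μ(dr). If there exist c > 0 and δ > 0 such that f(r) ≤ c r^δ for all r ≥ 1, then ∫_{(0,1)} r^{δ+ε} μ(dr) < ∞ for every ε > 0. -/

import Mathlib

open MeasureTheory Filter Set
open scoped ENNReal Topology

noncomputable section

/-- **Lemma 5.1(ii)(a).** If the Bernstein function
`f(λ) = ∫ (1 - e^{-λr}) μ(dr)` satisfies `f(r) ≤ c r^δ` for `r ≥ 1`, then
`∫_{(0,1)} r^{δ+ε} μ(dr) < ∞` for every `ε > 0`. -/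
theorem bernstein_moment_at_zero
    (μ : Measure ℝ) (hμsupp : μ (Set.Iic 0) = 0)
    (hμint : (∫⁻ r, ENNReal.ofReal (min r 1) ∂μ) < ∞)
    (c δ : ℝ) (hc : 0 < c) (hδ : 0 < δ)
    (hf : ∀ l : ℝ, 1 ≤ l → (∫ r, (1 - Real.exp (-(l * r))) ∂μ) ≤ c * l ^ δ)
    (ε : ℝ) (hε : 0 < ε) :
    (∫⁻ r in Set.Ioo (0:ℝ) 1, ENNReal.ofReal (r ^ (δ + ε)) ∂μ) < ∞ := by
  -- a.e. positivity
  have hae : ∀ᵐ r ∂μ, 0 < r := by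
    rw [ae_iff]
    convert hμsupp using 2
    ext r; simp [not_lt]
  -- integrability of the Bernstein integrand
  have hint : ∀ l : ℝ, 1 ≤ l → Integrable (fun r => 1 - Real.exp (-(l * r))) μ := by
    intro l hl
    have hl0 : (0:ℝ) < l := lt_of_lt_of_le one_pos hl
    have hg : Integrable (fun r : ℝ => l * min r 1) μ := by
      refine ⟨(Continuous.aestronglyMeasurable (by continuity)), ?_⟩
      show (∫⁻ r, (‖l * min r 1‖₊ : ℝ≥0∞) ∂μ) < ∞
      calc ∫⁻ r, (‖l * min r 1‖₊ : ℝ≥0∞) ∂μ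
          = ∫⁻ r, ENNReal.ofReal l * ENNReal.ofReal (min r 1) ∂μ := by
            refine lintegral_congr_ae (hae.mono fun r hr => ?_)
            have h1 : (0:ℝ) ≤ min r 1 := le_min hr.le one_pos.le
            dsimp only
            rw [← ENNReal.ofReal_mul hl0.le, ← Real.enorm_eq_ofReal (by positivity)]; rfl
        _ = ENNReal.ofReal l * ∫⁻ r, ENNReal.ofReal (min r 1) ∂μ := by
            rw [lintegral_const_mul]
            exact (measurable_id.min measurable_const).ennreal_ofReal
        _ < ∞ := ENNReal.mul_lt_top ENNReal.ofReal_lt_top hμint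
    refine hg.mono' (Continuous.aestronglyMeasurable (by continuity)) ?_
    refine hae.mono fun r hr => ?_
    have hlr : (0:ℝ) < l * r := mul_pos hl0 hr
    have h1 : Real.exp (-(l * r)) ≤ 1 := Real.exp_le_one_iff.mpr (by linarith)
    have h2 : (0:ℝ) < Real.exp (-(l * r)) := Real.exp_pos _
    rw [Real.norm_eq_abs, abs_of_nonneg (by linarith)]
    have h3 : 1 - Real.exp (-(l * r)) ≤ min (l * r) 1 := by
      refine le_min ?_ (by linarith)
      have := Real.add_one_le_exp (-(l * r))
      linarith
    calc 1 - Real.exp (-(l * r)) ≤ min (l * r) 1 := h3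
      _ ≤ l * min r 1 := by
          rcases le_total r 1 with h | h
          · rw [min_eq_left h]; exact min_le_left _ _
          · rw [min_eq_right h, mul_one]
            exact le_trans (min_le_right _ _) hl
  -- measure bound on dyadic annuli
  set I : ℕ → Set ℝ := fun n => Set.Ioc ((1/2:ℝ)^(n+1)) ((1/2:ℝ)^n) with hI
  have hmeas : ∀ n : ℕ, μ (I n) ≤ ENNReal.ofReal (3 * (c * ((2:ℝ)^n) ^ δ)) := by
    intro n
    set l : ℝ := (2:ℝ)^n with hl
    have hl1 : (1:ℝ) ≤ l := one_le_pow₀ (by norm_num)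
    have hl0 : (0:ℝ) < l := lt_of_lt_of_le one_pos hl1
    -- pointwise lower bound (1/3) on I n
    have key : ENNReal.ofReal (1/3) * μ (I n) ≤ ENNReal.ofReal (c * l ^ δ) := by
      calc ENNReal.ofReal (1/3) * μ (I n)
          = ∫⁻ r in I n, ENNReal.ofReal (1/3) ∂μ := (setLIntegral_const _ _).symm
        _ ≤ ∫⁻ r in I n, ENNReal.ofReal (1 - Real.exp (-(l * r))) ∂μ := by
            refine setLIntegral_mono (Continuous.measurable (by continuity)).ennreal_ofReal ?_
            intro r hr
            refine ENNReal.ofReal_le_ofReal ?_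
            have h1 : (1/2:ℝ) ≤ l * r := by
              have : (1/2:ℝ)^(n+1) < r := hr.1
              have h2 : l * (1/2:ℝ)^(n+1) = 1/2 := by
                rw [hl, pow_succ, ← mul_assoc, ← mul_pow]
                norm_num
              nlinarith [pow_pos (by norm_num : (0:ℝ) < 1/2) (n+1)]
            have h3 : Real.exp (-(l * r)) ≤ Real.exp (-(1/2)) :=
              Real.exp_le_exp.mpr (by linarith)
            have h4 : Real.exp (-(1/2 : ℝ)) ≤ 2/3 := by
              rw [Real.exp_neg]
              rw [inv_le_comm₀ (Real.exp_pos _) (by norm_num)]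
              have := Real.add_one_le_exp (1/2 : ℝ)
              linarith
            linarith
        _ ≤ ∫⁻ r, ENNReal.ofReal (1 - Real.exp (-(l * r))) ∂μ :=
            setLIntegral_le_lintegral _ _
        _ = ENNReal.ofReal (∫ r, (1 - Real.exp (-(l * r))) ∂μ) := by
            refine (ofReal_integral_eq_lintegral_ofReal (hint l hl1) ?_).symm
            refine hae.mono fun r hr => ?_
            have : Real.exp (-(l * r)) ≤ 1 :=
              Real.exp_le_one_iff.mpr (by nlinarith)
            simp only [Pi.zero_apply]; linarith
        _ ≤ ENNReal.ofReal (c * l ^ δ) := ENNReal.ofReal_le_ofReal (hf l hl1)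
    calc μ (I n) = ENNReal.ofReal 3 * (ENNReal.ofReal (1/3) * μ (I n)) := by
          rw [← mul_assoc, ← ENNReal.ofReal_mul (by norm_num)]
          norm_num
      _ ≤ ENNReal.ofReal 3 * ENNReal.ofReal (c * l ^ δ) :=
          mul_le_mul_right key _
      _ = ENNReal.ofReal (3 * (c * l ^ δ)) := (ENNReal.ofReal_mul (by norm_num)).symm
  -- covering
  have hcover : Set.Ioo (0:ℝ) 1 ⊆ ⋃ n, I n := by
    intro r hr
    have hex : ∃ m, (1/2:ℝ)^m < r := exists_pow_lt_of_lt_one hr.1 (by norm_num)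
    classical
    have hspec : (1/2:ℝ)^(Nat.find hex) < r := Nat.find_spec hex
    have hm0 : Nat.find hex ≠ 0 := by
      intro h
      rw [h] at hspec
      simp at hspec
      linarith [hr.2]
    obtain ⟨n, hn⟩ := Nat.exists_eq_succ_of_ne_zero hm0
    rw [hn] at hspec
    refine Set.mem_iUnion.mpr ⟨n, hspec, ?_⟩
    by_contra h
    push_neg at h
    exact Nat.find_min hex (hn ▸ Nat.lt_succ_self n) h
  -- term computation
  have hterm : ∀ n : ℕ,
      (∫⁻ r in I n, ENNReal.ofReal (r ^ (δ + ε)) ∂μ)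
        ≤ ENNReal.ofReal (3 * c) * ENNReal.ofReal ((2:ℝ) ^ (-ε)) ^ n := by
    intro n
    have hb0 : (0:ℝ) < (1/2:ℝ)^n := by positivity
    calc (∫⁻ r in I n, ENNReal.ofReal (r ^ (δ + ε)) ∂μ)
        ≤ ∫⁻ _ in I n, ENNReal.ofReal (((1/2:ℝ)^n) ^ (δ + ε)) ∂μ := by
          refine setLIntegral_mono measurable_const ?_
          intro r hr
          refine ENNReal.ofReal_le_ofReal ?_
          have hr0 : (0:ℝ) < r := lt_trans (by positivity) hr.1
          exact Real.rpow_le_rpow hr0.le hr.2 (by linarith)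
      _ = ENNReal.ofReal (((1/2:ℝ)^n) ^ (δ + ε)) * μ (I n) := setLIntegral_const _ _
      _ ≤ ENNReal.ofReal (((1/2:ℝ)^n) ^ (δ + ε)) * ENNReal.ofReal (3 * (c * ((2:ℝ)^n) ^ δ)) :=
          mul_le_mul_right (hmeas n) _
      _ = ENNReal.ofReal ((((1/2:ℝ)^n) ^ (δ + ε)) * (3 * (c * ((2:ℝ)^n) ^ δ))) :=
          (ENNReal.ofReal_mul (by positivity)).symm
      _ = ENNReal.ofReal (3 * c) * ENNReal.ofReal ((2:ℝ) ^ (-ε)) ^ n := by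
          rw [← ENNReal.ofReal_pow (by positivity), ← ENNReal.ofReal_mul (by positivity)]
          congr 1
          have e1 : ((1/2:ℝ)^n) ^ (δ + ε) = (2:ℝ) ^ (-(n:ℝ) * (δ + ε)) := by
            rw [one_div, inv_pow, ← Real.rpow_natCast (2:ℝ) n,
              ← Real.rpow_neg (by norm_num), ← Real.rpow_mul (by norm_num)]
          have e2 : ((2:ℝ)^n) ^ δ = (2:ℝ) ^ ((n:ℝ) * δ) := by
            rw [← Real.rpow_natCast (2:ℝ) n, ← Real.rpow_mul (by norm_num)]
          have e3 : ((2:ℝ) ^ (-ε)) ^ n = (2:ℝ) ^ (-ε * (n:ℝ)) := by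
            rw [← Real.rpow_natCast ((2:ℝ) ^ (-ε)) n, ← Real.rpow_mul (by norm_num)]
          calc ((1/2:ℝ)^n) ^ (δ + ε) * (3 * (c * ((2:ℝ)^n) ^ δ))
              = 3 * c * ((2:ℝ) ^ (-(n:ℝ) * (δ + ε)) * (2:ℝ) ^ ((n:ℝ) * δ)) := by
                rw [e1, e2]; ring
            _ = 3 * c * (2:ℝ) ^ (-(n:ℝ) * (δ + ε) + (n:ℝ) * δ) := by
                rw [← Real.rpow_add (by norm_num : (0:ℝ) < 2)]
            _ = 3 * c * ((2:ℝ) ^ (-ε)) ^ n := by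
                rw [e3, show -(n:ℝ) * (δ + ε) + (n:ℝ) * δ = -ε * (n:ℝ) from by ring]
    -- end
  calc (∫⁻ r in Set.Ioo (0:ℝ) 1, ENNReal.ofReal (r ^ (δ + ε)) ∂μ)
      ≤ ∫⁻ r in ⋃ n, I n, ENNReal.ofReal (r ^ (δ + ε)) ∂μ := lintegral_mono_set hcover
    _ ≤ ∑' n, ∫⁻ r in I n, ENNReal.ofReal (r ^ (δ + ε)) ∂μ := lintegral_iUnion_le _ _
    _ ≤ ∑' n, ENNReal.ofReal (3 * c) * ENNReal.ofReal ((2:ℝ) ^ (-ε)) ^ n :=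
        ENNReal.tsum_le_tsum hterm
    _ = ENNReal.ofReal (3 * c) * ∑' n, ENNReal.ofReal ((2:ℝ) ^ (-ε)) ^ n :=
        ENNReal.tsum_mul_left
    _ < ∞ := by
        refine ENNReal.mul_lt_top ENNReal.ofReal_lt_top ?_
        rw [ENNReal.tsum_geometric]
        refine ENNReal.inv_lt_top.mpr ?_
        refine tsub_pos_iff_lt.mpr ?_
        rw [← ENNReal.ofReal_one]
        refine ENNReal.ofReal_lt_ofReal_iff_of_nonneg (by positivity) |>.mpr ?_
        calc (2:ℝ) ^ (-ε) < (2:ℝ)^(0:ℝ) :=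
            Real.rpow_lt_rpow_left_iff (by norm_num) |>.mpr (by linarith)
          _ = 1 := Real.rpow_zero 2

end
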